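/- Fix q > 0, a > 1 and a sequence (X_i)_{i≥1} of positive reals. Let A be the on/off process consisting of consecutive cycles where cycle i has on-period of length X_i at rate a followed by an off-period of length F_i = max((a−1)X_i, (a−1)aX_i²/(2q) − X_i), and let T′_N = Σ_{i=1}^N (X_i + F_i) and Q(t) = sup_{0≤s≤t} ∫_s^t (A(u) − 1) du. Then for every N ≥ 1 the time-averaged queue length satisfies (1/T′_N) ∫_0^{T′_N} Q(t) dt ≤ q. -/

import Mathlib

open MeasureTheory Set Finset

lemma aux_const_int (A : ℝ → ℝ) (c u t : ℝ) (hut : u ≤ t)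
    (h : ∀ v, u ≤ v → v < t → A v = c) :
    IntervalIntegrable (fun v => A v - 1) volume u t ∧
    (∫ v in u..t, (A v - 1)) = (c - 1) * (t - u) := by
  have h1 : ∀ᵐ v : ℝ ∂volume, v ≠ t := by
    rw [ae_iff]; simp
  have hae : (fun _ : ℝ => (c:ℝ) - 1) =ᵐ[volume.restrict (uIoc u t)] fun v => A v - 1 := by
    rw [uIoc_of_le hut]
    filter_upwards [ae_restrict_of_ae h1, ae_restrict_mem measurableSet_Ioc] with v hv hmem
    rw [h v (le_of_lt hmem.1) (lt_of_le_of_ne hmem.2 hv)]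
  constructor
  · exact (intervalIntegrable_const).congr_ae hae
  · have h2 : ∀ᵐ v ∂volume, v ∈ uIoc u t → A v - 1 = c - 1 := by
      filter_upwards [h1] with v hv hmem
      rw [uIoc_of_le hut] at hmem
      rw [h v (le_of_lt hmem.1) (lt_of_le_of_ne hmem.2 hv)]
    rw [intervalIntegral.integral_congr_ae h2, intervalIntegral.integral_const]
    simp [smul_eq_mul]; ring

theorem stmt_14 (q a : ℝ) (hq : 0 < q) (ha : 1 < a)
    (X : ℕ → ℝ) (hX : ∀ i, 0 < X i)
    (F : ℕ → ℝ)
    (hF : ∀ i, F i = max ((a - 1) * X i) ((a - 1) * a * (X i) ^ 2 / (2 * q) - X i))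
    (T : ℕ → ℝ) (hT : ∀ N, T N = ∑ i ∈ Finset.range N, (X i + F i))
    (A : ℝ → ℝ)
    (hAon : ∀ i, ∀ t, T i ≤ t → t < T i + X i → A t = a)
    (hAoff : ∀ i, ∀ t, T i + X i ≤ t → t < T (i + 1) → A t = 0)
    (Q : ℝ → ℝ)
    (hQ : ∀ t, Q t = ⨆ u : Set.Icc (0:ℝ) t, ∫ v in (u : ℝ)..t, (A v - 1)) :
    ∀ N, 1 ≤ N → (1 / T N) * ∫ t in (0:ℝ)..(T N), Q t ≤ q := by
  have ha0 : (0:ℝ) < a - 1 := by linarith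
  have hF1 : ∀ i, (a - 1) * X i ≤ F i := fun i => (hF i) ▸ le_max_left _ _
  have hF2 : ∀ i, (a - 1) * a * (X i) ^ 2 / (2 * q) - X i ≤ F i :=
    fun i => (hF i) ▸ le_max_right _ _
  have hFpos : ∀ i, 0 < F i := fun i =>
    lt_of_lt_of_le (mul_pos ha0 (hX i)) (hF1 i)
  have hT0 : T 0 = 0 := by simp [hT]
  have hTsucc : ∀ i, T (i + 1) = T i + (X i + F i) := by
    intro i; rw [hT, hT, Finset.sum_range_succ]
  have hTX : ∀ i, T i + X i ≤ T (i + 1) := by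
    intro i; rw [hTsucc i]; nlinarith [hFpos i]
  have hTaX : ∀ i, T i + a * X i ≤ T (i + 1) := by
    intro i; rw [hTsucc i]; nlinarith [hF1 i]
  have hTlt : ∀ i, T i < T (i + 1) := by
    intro i; rw [hTsucc i]; nlinarith [hFpos i, hX i]
  have hTmono : Monotone T := monotone_nat_of_le_succ (fun i => (hTlt i).le)
  have hTnn : ∀ i, 0 ≤ T i := fun i => hT0 ▸ hTmono (Nat.zero_le i)
  -- integral over on-period pieces
  have hon : ∀ i, ∀ u t, T i ≤ u → u ≤ t → t ≤ T i + X i →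
      IntervalIntegrable (fun v => A v - 1) volume u t ∧
      (∫ v in u..t, (A v - 1)) = (a - 1) * (t - u) := by
    intro i u t h1 h2 h3
    exact aux_const_int A a u t h2 (fun v hv hv' =>
      hAon i v (le_trans h1 hv) (lt_of_lt_of_le hv' h3))
  have hoff : ∀ i, ∀ u t, T i + X i ≤ u → u ≤ t → t ≤ T (i + 1) →
      IntervalIntegrable (fun v => A v - 1) volume u t ∧
      (∫ v in u..t, (A v - 1)) = -(t - u) := by
    intro i u t h1 h2 h3
    have := aux_const_int A 0 u t h2 (fun v hv hv' =>
      hAoff i v (le_trans h1 hv) (lt_of_lt_of_le hv' h3))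
    refine ⟨this.1, ?_⟩; rw [this.2]; ring
  -- integrability on each [T i, t] for t ≤ T (i+1), and in general
  have hint : ∀ k, IntervalIntegrable (fun v => A v - 1) volume 0 (T k) := by
    intro k
    induction k with
    | zero => rw [hT0]
    | succ k ih =>
        refine ih.trans (IntervalIntegrable.trans
          (b := T k + X k) ?_ ?_)
        · exact (hon k (T k) (T k + X k) le_rfl (by nlinarith [hX k]) le_rfl).1
        · exact (hoff k (T k + X k) (T (k+1)) le_rfl (hTX k) le_rfl).1
  have hint' : ∀ k u t, 0 ≤ u → u ≤ T k → 0 ≤ t → t ≤ T k →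
      IntervalIntegrable (fun v => A v - 1) volume u t := by
    intro k u t hu hu' ht ht'
    refine (hint k).mono_set ?_
    apply Set.uIcc_subset_uIcc
    · rw [uIcc_of_le (hTnn k)]; exact ⟨hu, hu'⟩
    · rw [uIcc_of_le (hTnn k)]; exact ⟨ht, ht'⟩
  -- key drain lemma
  have hL : ∀ k, ∀ u, 0 ≤ u → u ≤ T k → (∫ v in u..T k, (A v - 1)) ≤ 0 := by
    intro k
    induction k with
    | zero =>
        intro u hu hu'
        rw [hT0] at hu' ⊢
        rw [le_antisymm hu' hu, intervalIntegral.integral_same]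
    | succ k ih =>
        intro u hu hu'
        have hoffint := hoff k (T k + X k) (T (k+1)) le_rfl (hTX k) le_rfl
        have honint := hon k (T k) (T k + X k) le_rfl (by nlinarith [hX k]) le_rfl
        have hcyc : (∫ v in T k..T (k+1), (A v - 1)) = (a-1) * X k - F k := by
          rw [← intervalIntegral.integral_add_adjacent_intervals honint.1 hoffint.1,
            honint.2, hoffint.2, hTsucc k]; ring
        rcases le_total u (T k) with h | h
        · rw [← intervalIntegral.integral_add_adjacent_intervals
            (hint' k u (T k) hu h (hTnn k) le_rfl) (hint' (k+1) (T k) (T (k+1)) (hTnn k) (hTmono k.le_succ) (hTnn (k+1)) le_rfl)]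
          have := ih u hu h
          rw [hcyc]; nlinarith [hF1 k]
        · rcases le_total u (T k + X k) with h2 | h2
          · rw [← intervalIntegral.integral_add_adjacent_intervals
              (hon k u (T k + X k) h h2 le_rfl).1 hoffint.1,
              (hon k u (T k + X k) h h2 le_rfl).2, hoffint.2, hTsucc k]
            nlinarith [hF1 k]
          · rw [(hoff k u (T (k+1)) h2 hu' le_rfl).2]
            linarith
  -- closed form for Q on cycle i
  have hQform : ∀ i t, T i ≤ t → t ≤ T (i+1) →
      Q t = max 0 (min ((a-1)*(t - T i)) (a * X i - (t - T i))) := by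
    intro i t hti hti'
    have ht0 : 0 ≤ t := le_trans (hTnn i) hti
    have hTiXi : T i ≤ T i + X i := by nlinarith [hX i]
    have hvTi : (∫ v in (T i)..t, (A v - 1)) =
        min ((a-1)*(t - T i)) (a * X i - (t - T i)) := by
      rcases le_total t (T i + X i) with h | h
      · rw [(hon i (T i) t le_rfl hti h).2, min_eq_left (by nlinarith)]
      · rw [← intervalIntegral.integral_add_adjacent_intervals
          (hon i (T i) (T i + X i) le_rfl hTiXi le_rfl).1
          (hoff i (T i + X i) t le_rfl h hti').1,
          (hon i (T i) (T i + X i) le_rfl hTiXi le_rfl).2,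
          (hoff i (T i + X i) t le_rfl h hti').2, min_eq_right (by nlinarith)]
        ring
    have hbound : ∀ u : Icc (0:ℝ) t, (∫ v in (u:ℝ)..t, (A v - 1)) ≤
        max 0 (min ((a-1)*(t - T i)) (a * X i - (t - T i))) := by
      rintro ⟨u, hu0, hut⟩
      simp only
      have hutN : u ≤ T (i+1) := le_trans hut hti'
      rcases le_total u (T i) with h | h
      · rw [← intervalIntegral.integral_add_adjacent_intervals
          (hint' i u (T i) hu0 h (hTnn i) le_rfl)
          (hint' (i+1) (T i) t (hTnn i) (hTmono i.le_succ) ht0 hti'), hvTi]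
        have := hL i u hu0 h
        refine le_trans ?_ (le_max_right _ _)
        linarith
      · rcases le_total u (T i + X i) with h2 | h2
        · have hsplit := intervalIntegral.integral_add_adjacent_intervals
            (hon i (T i) u le_rfl h h2).1
            (hint' (i+1) u t (le_trans (hTnn i) h) hutN ht0 hti')
          have heq : (∫ v in u..t, (A v - 1)) =
              min ((a-1)*(t - T i)) (a * X i - (t - T i)) - (a-1)*(u - T i) := by
            rw [← hvTi, ← hsplit, (hon i (T i) u le_rfl h h2).2]; ring
          rw [heq]
          refine le_trans ?_ (le_max_right _ _)
          nlinarith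
        · rw [(hoff i u t h2 hut hti').2]
          refine le_trans ?_ (le_max_left _ _)
          linarith
    rw [hQ t]
    haveI : Nonempty (Icc (0:ℝ) t) := (Set.nonempty_Icc.2 ht0).to_subtype
    have hbdd : BddAbove (Set.range fun u : Icc (0:ℝ) t =>
        ∫ v in (u:ℝ)..t, (A v - 1)) := by
      refine ⟨max 0 (min ((a-1)*(t - T i)) (a * X i - (t - T i))), ?_⟩
      rintro y ⟨u, rfl⟩
      exact hbound u
    apply le_antisymm
    · exact ciSup_le hbound
    · apply max_le
      · have := le_ciSup hbdd (⟨t, ht0, le_rfl⟩ : Icc (0:ℝ) t)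
        simpa using this
      · have := le_ciSup hbdd (⟨T i, hTnn i, hti⟩ : Icc (0:ℝ) t)
        simp only at this
        rw [hvTi] at this
        exact this
  -- per-cycle integral of Q
  have hQint : ∀ i, (∫ t in (T i)..(T (i+1)), Q t) = (a-1)*a*(X i)^2/2 := by
    intro i
    set g : ℝ → ℝ := fun t => max 0 (min ((a-1)*(t - T i)) (a * X i - (t - T i))) with hg
    have hTiXi : T i ≤ T i + X i := by nlinarith [hX i]
    have hXaX : T i + X i ≤ T i + a * X i := by nlinarith [hX i]
    have hcg : Continuous g := by
      apply continuous_const.max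
      exact ((continuous_const.mul (continuous_id.sub continuous_const)).min
        (continuous_const.sub (continuous_id.sub continuous_const)))
    have e0 : (∫ t in (T i)..(T (i+1)), Q t) = ∫ t in (T i)..(T (i+1)), g t := by
      apply intervalIntegral.integral_congr
      intro t ht
      rw [uIcc_of_le (hTlt i).le] at ht
      exact hQform i t ht.1 ht.2
    have e1 : (∫ t in (T i)..(T i + X i), g t) = (a-1)*(X i)^2/2 := by
      have : (∫ t in (T i)..(T i + X i), g t)
          = ∫ t in (T i)..(T i + X i), (a-1)*(t - T i) := by
        apply intervalIntegral.integral_congr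
        intro t ht
        rw [uIcc_of_le hTiXi] at ht
        obtain ⟨h1, h2⟩ := ht
        rw [hg]
        simp only
        rw [min_eq_left (by nlinarith), max_eq_right (by nlinarith)]
      rw [this,
        intervalIntegral.integral_comp_sub_right (fun s => (a-1)*s) (T i)]
      have h0 : T i - T i = (0:ℝ) := by ring
      have h1 : T i + X i - T i = X i := by ring
      rw [h0, h1, intervalIntegral.integral_const_mul, integral_id]
      ring
    have e2 : (∫ t in (T i + X i)..(T i + a * X i), g t) = (a-1)^2*(X i)^2/2 := by
      have : (∫ t in (T i + X i)..(T i + a * X i), g t)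
          = ∫ t in (T i + X i)..(T i + a * X i), (a * X i - (t - T i)) := by
        apply intervalIntegral.integral_congr
        intro t ht
        rw [uIcc_of_le hXaX] at ht
        obtain ⟨h1, h2⟩ := ht
        rw [hg]
        simp only
        rw [min_eq_right (by nlinarith), max_eq_right (by nlinarith)]
      rw [this,
        intervalIntegral.integral_comp_sub_right (fun s => a * X i - s) (T i)]
      have h0 : T i + X i - T i = X i := by ring
      have h1 : T i + a * X i - T i = a * X i := by ring
      rw [h0, h1, intervalIntegral.integral_sub intervalIntegrable_const
        intervalIntegral.intervalIntegrable_id, integral_id, intervalIntegral.integral_const,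
        smul_eq_mul]
      ring
    have e3 : (∫ t in (T i + a * X i)..(T (i+1)), g t) = 0 := by
      have : (∫ t in (T i + a * X i)..(T (i+1)), g t)
          = ∫ t in (T i + a * X i)..(T (i+1)), (0:ℝ) := by
        apply intervalIntegral.integral_congr
        intro t ht
        rw [uIcc_of_le (hTaX i)] at ht
        obtain ⟨h1, h2⟩ := ht
        rw [hg]
        simp only
        rw [max_eq_left (le_trans (min_le_right _ _) (by nlinarith))]
      rw [this]
      simp
    rw [e0,
      ← intervalIntegral.integral_add_adjacent_intervals
        (a := T i) (b := T i + X i) (c := T (i+1))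
        (hcg.intervalIntegrable _ _) (hcg.intervalIntegrable _ _),
      ← intervalIntegral.integral_add_adjacent_intervals
        (a := T i + X i) (b := T i + a * X i) (c := T (i+1))
        (hcg.intervalIntegrable _ _) (hcg.intervalIntegrable _ _),
      e1, e2, e3]
    ring
  -- per-cycle bound
  have hcycb : ∀ i, (∫ t in (T i)..(T (i+1)), Q t) ≤ q * (X i + F i) := by
    intro i
    rw [hQint i]
    have h := hF2 i
    have key : q * ((a-1)*a*(X i)^2/(2*q)) = (a-1)*a*(X i)^2/2 := by
      field_simp
    have h2 : q * ((a-1)*a*(X i)^2/(2*q)) ≤ q * (X i + F i) := by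
      apply mul_le_mul_of_nonneg_left _ hq.le
      linarith
    rw [key] at h2
    linarith
  -- integrability of Q on each cycle
  have hQI : ∀ i, IntervalIntegrable Q volume (T i) (T (i+1)) := by
    intro i
    have hcg : Continuous fun t =>
        max 0 (min ((a-1)*(t - T i)) (a * X i - (t - T i))) := by
      apply continuous_const.max
      exact ((continuous_const.mul (continuous_id.sub continuous_const)).min
        (continuous_const.sub (continuous_id.sub continuous_const)))
    refine (hcg.intervalIntegrable _ _).congr ?_
    intro v hv
    rw [uIoc_of_le (hTlt i).le] at hv
    exact (hQform i v hv.1.le hv.2).symm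
  -- finish
  intro N hN
  have hsum : (∫ t in (0:ℝ)..(T N), Q t)
      = ∑ i ∈ Finset.range N, ∫ t in (T i)..(T (i+1)), Q t := by
    rw [intervalIntegral.sum_integral_adjacent_intervals (fun k _ => hQI k), hT0]
  have hTpos : 0 < T N := by
    have h1 : (0:ℝ) < T 1 := by
      rw [hTsucc 0, hT0]
      nlinarith [hX 0, hFpos 0]
    exact lt_of_lt_of_le h1 (hTmono hN)
  have hle : (∫ t in (0:ℝ)..(T N), Q t) ≤ q * T N := by
    rw [hsum, hT N, Finset.mul_sum]
    exact Finset.sum_le_sum (fun i _ => hcycb i)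
  calc (1 / T N) * ∫ t in (0:ℝ)..(T N), Q t
      ≤ (1 / T N) * (q * T N) := by
        apply mul_le_mul_of_nonneg_left hle (by positivity)
    _ = q := by field_simp
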